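/- Let R be an integral domain and M a divisible R-module that is a pseudo-absorbing primary multiplication module. Then M is a simple module (every proper submodule of M is zero). -/

import Mathlib

/-- A proper ideal `I` is 2-absorbing primary if `a*b*c ∈ I` implies
`a*b ∈ I` or `a*c ∈ √I` or `b*c ∈ √I`. -/
def IsTwoAbsPrimary {R : Type*} [CommRing R] (I : Ideal R) : Prop :=
  I ≠ ⊤ ∧ ∀ a b c : R, a * b * c ∈ I → a * b ∈ I ∨ a * c ∈ I.radical ∨ b * c ∈ I.radical

/-- A proper submodule `N` of `M` is pseudo-absorbing primary if `(N :_R M)`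
is a 2-absorbing primary ideal of `R`. -/
def IsPseudoAbsPrimary {R M : Type*} [CommRing R] [AddCommGroup M] [Module R M]
    (N : Submodule R M) : Prop :=
  N ≠ ⊤ ∧ IsTwoAbsPrimary (N.colon ⊤)

/-- `M` is a pseudo-absorbing primary multiplication module if every
pseudo-absorbing primary submodule `N` satisfies `N = I • M` for some ideal `I`. -/
def IsPAPMultiplication (R M : Type*) [CommRing R] [AddCommGroup M] [Module R M] : Prop :=
  ∀ N : Submodule R M, IsPseudoAbsPrimary N → ∃ I : Ideal R, N = I • (⊤ : Submodule R M)

/-- A divisible pseudo-absorbing primary multiplication module over an integral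
domain is simple: every proper submodule is zero. -/
theorem stmt_5 {R M : Type*} [CommRing R] [IsDomain R] [AddCommGroup M] [Module R M]
    (hdiv : ∀ r : R, r ≠ 0 → ∀ m : M, ∃ m' : M, r • m' = m)
    (hM : IsPAPMultiplication R M) :
    ∀ N : Submodule R M, N ≠ ⊤ → N = ⊥ := by
  intro N hN
  -- For proper N, (N : M) = 0
  have hcolon : ∀ (N' : Submodule R M), N' ≠ ⊤ → N'.colon ⊤ = ⊥ := by
    intro N' hN'
    ext r
    simp only [Ideal.mem_bot]
    constructor
    · intro hr
      by_contra hr0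
      apply hN'
      rw [eq_top_iff]
      intro m _
      obtain ⟨m', hm'⟩ := hdiv r hr0 m
      rw [← hm']
      exact Submodule.mem_colon.mp hr m' (Submodule.mem_top (R := R))
    · rintro rfl
      exact Submodule.mem_colon.mpr fun m _ => by simp
  have hc := hcolon N hN
  -- N is pseudo-absorbing primary
  have hpap : IsPseudoAbsPrimary N := by
    refine ⟨hN, ?_, ?_⟩
    · rw [hc]; exact bot_ne_top
    · intro a b c habc
      rw [hc] at habc ⊢
      simp only [Ideal.mem_bot] at habc ⊢
      rcases mul_eq_zero.mp habc with h | h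
      · exact Or.inl h
      · right; left
        exact Ideal.le_radical (by simp [h])
  obtain ⟨I, hI⟩ := hM N hpap
  have hIsub : I ≤ N.colon ⊤ := by
    intro r hr
    refine Submodule.mem_colon.mpr fun m _ => ?_
    rw [hI]
    exact Submodule.smul_mem_smul hr trivial
  rw [hc, le_bot_iff] at hIsub
  rw [hI, hIsub, Submodule.bot_smul]
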